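/- arXiv:2404.17150 — 2 statements merged into one kernel-verified Lean document; each statement's English description precedes it below -/
import Mathlib

section
/- For integers n \ge 9 and f = 0 if n is even, f = 1 if n is odd: if m = m_{n,r} + p where 1 \le r \le \lceil n/2 \rceil - 4, 1 \le p < 2^{2r-1-f}, and m_{n,r} = \sum_{i=0}^{2} 2^{n-4-i} + \sum_{i=0}^{\lceil n/2 \rceil - 4 - r} 2^{n-8-2i} + 2^{2r-1-f}, then (n+1)m - ex(m) > 2^{n-1}, where ex is the closed-form hypercube edge function of binary expansions. -/
/-- Closed-form hypercube edge-isoperimetric function: for `m` with binary expansion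
`m = 2^{t_0} + ... + 2^{t_s}` with `t_0 > ... > t_s`, this equals
`∑ t_i 2^{t_i} + ∑ 2 i 2^{t_i}`. -/
def ex : ℕ → ℕ
  | 0 => 0
  | (m+1) =>
      Nat.log2 (m+1) * 2 ^ Nat.log2 (m+1) + 2 * ((m+1) - 2 ^ Nat.log2 (m+1))
        + ex ((m+1) - 2 ^ Nat.log2 (m+1))
decreasing_by
  exact Nat.sub_lt (Nat.succ_pos m) (Nat.two_pow_pos _)

lemma log2_pow_add (t q : ℕ) (h : q < 2^t) : Nat.log2 (2^t + q) = t := by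
  rw [Nat.log2_eq_log_two]
  exact Nat.log_eq_of_pow_le_of_lt_pow (by omega) (by rw [pow_succ]; omega)

lemma ex_peel (t q : ℕ) (h : q < 2^t) : ex (2^t + q) = t * 2^t + 2*q + ex q := by
  have h1 : 0 < 2^t := Nat.two_pow_pos t
  obtain ⟨k, hk⟩ : ∃ k, 2^t + q = k + 1 := ⟨2^t + q - 1, by omega⟩
  rw [hk, ex, ← hk, log2_pow_add t q h, Nat.add_sub_cancel_left]

lemma ex_lt (p : ℕ) : ∀ u, 1 ≤ p → p < 2^u → ex p < u * p := by
  induction p using Nat.strong_induction_on with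
  | _ p IH =>
    intro u hp1 hp2
    set t := Nat.log2 p with ht
    have hpt : 2^t ≤ p := Nat.log2_self_le (by omega)
    have hpt2 : p < 2^(t+1) := Nat.lt_log2_self
    have htu : t < u := by
      by_contra hc
      have : 2^u ≤ 2^t := Nat.pow_le_pow_right (by norm_num) (by omega)
      omega
    set q := p - 2^t with hq
    have hqlt : q < 2^t := by rw [pow_succ] at hpt2; omega
    have hpe : p = 2^t + q := by omega
    rw [hpe, ex_peel t q hqlt]
    rcases Nat.eq_zero_or_pos q with h0 | h0
    · rw [h0]
      have hex0 : ex 0 = 0 := by simp [ex]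
      rw [hex0]
      nlinarith [Nat.two_pow_pos t]
    · have ht1 : 1 ≤ t := by
        rcases Nat.eq_zero_or_pos t with h | h
        · exfalso; rw [h] at hqlt; omega
        · exact h
      have hIH : ex q < t * q := IH q (by omega) t h0 hqlt
      nlinarith [Nat.two_pow_pos t]

open Finset

lemma geom3 (c : ℕ) : ∀ K, 3 * (∑ i ∈ range K, 2^(c+2*i)) + 2^c = 2^(c+2*K) := by
  intro K
  induction K with
  | zero => simp
  | succ K ih =>
    rw [Finset.sum_range_succ]
    have h1 : 2^(c+2*(K+1)) = 4 * 2^(c+2*K) := by ring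
    omega

lemma geom_bound (c K : ℕ) : (∑ i ∈ range K, 2^(c+2*i)) + 2^c ≤ 2^(c+2*K) := by
  have := geom3 c K
  omega

lemma ex_geom (c : ℕ) : ∀ K q, q < 2^c →
    ex ((∑ i ∈ range K, 2^(c+2*i)) + q) + 2 * (∑ i ∈ range K, 2^(c+2*i))
      = (c + 2*K) * (∑ i ∈ range K, 2^(c+2*i)) + 2*K*q + ex q := by
  intro K
  induction K with
  | zero => simp
  | succ K ih =>
    intro q hq
    have hb : (∑ i ∈ range K, 2^(c+2*i)) + q < 2^(c+2*K) := by
      have := geom_bound c K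
      have hc : (2:ℕ)^c ≤ 2^(c+2*K) := Nat.pow_le_pow_right (by norm_num) (by omega)
      omega
    rw [Finset.sum_range_succ]
    have hcomm : (∑ i ∈ range K, 2^(c+2*i)) + 2^(c+2*K) + q
        = 2^(c+2*K) + ((∑ i ∈ range K, 2^(c+2*i)) + q) := by ring
    rw [hcomm, ex_peel _ _ hb]
    have := ih q hq
    nlinarith [this]

set_option maxHeartbeats 1000000 in
open Finset in
/-- Case 1 of Lemma 8: for `n ≥ 9`, `1 ≤ r ≤ ⌈n/2⌉ - 4` and `1 ≤ p < 2^{2r-1-f}`,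
the value `m = m_{n,r} + p` strictly between consecutive breakpoints satisfies
`(n+1)m - ex(m) > 2^{n-1}`. -/
theorem xi_between_breakpoints (n r f p m : ℕ) (hn : 9 ≤ n)
    (hf : f = if Even n then 0 else 1)
    (hr1 : 1 ≤ r) (hr2 : r ≤ (n+1) / 2 - 4)
    (hp1 : 1 ≤ p) (hp2 : p < 2 ^ (2*r - 1 - f))
    (hm : m = 2 ^ (n-4) + 2 ^ (n-5) + 2 ^ (n-6)
        + (∑ i ∈ range ((n+1) / 2 - 3 - r), 2 ^ (n - 8 - 2 * i)) + 2 ^ (2*r - 1 - f) + p) :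
    (2 : ℤ) ^ (n-1) < ((n : ℤ) + 1) * m - ex m := by
  have hf2 : (n % 2 = 0 ∧ f = 0) ∨ (n % 2 = 1 ∧ f = 1) := by
    rcases Nat.even_or_odd n with h | h
    · left; exact ⟨Nat.even_iff.mp h, by rw [hf, if_pos h]⟩
    · right; exact ⟨Nat.odd_iff.mp h, by rw [hf, if_neg (Nat.not_even_iff_odd.mpr h)]⟩
  set K := (n+1)/2 - 3 - r with hKdef
  set u := 2*r - 1 - f with hudef
  have hu1 : 1 ≤ u := by
    rcases Nat.eq_zero_or_pos u with h | h
    · rw [h] at hp2; simp at hp2; omega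
    · exact h
  have hnuk : n = u + 2*K + 7 := by omega
  have hK1 : 1 ≤ K := by omega
  -- rewrite the sum
  have hsum : (∑ i ∈ range K, 2^(n-8-2*i)) = ∑ i ∈ range K, 2^(u+1+2*i) := by
    refine Eq.trans ?_ (Finset.sum_range_reflect (fun j => 2^(u+1+2*j)) K)
    apply Finset.sum_congr rfl
    intro j hj
    simp only [Finset.mem_range] at hj
    congr 1
    omega
  rw [hsum] at hm
  set S := ∑ i ∈ range K, 2^(u+1+2*i) with hSdef
  have e4 : n-4 = u+2*K+3 := by omega
  have e5 : n-5 = u+2*K+2 := by omega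
  have e6 : n-6 = u+2*K+1 := by omega
  rw [e4, e5, e6] at hm
  have hm' : m = 2^(u+2*K+3) + (2^(u+2*K+2) + (2^(u+2*K+1) + (S + (2^u + p)))) := by
    rw [hm]; ring
  -- bounds
  have hq0 : 2^u + p < 2^(u+1) := by rw [pow_succ]; omega
  have b1 : S + (2^u + p) < 2^(u+2*K+1) := by
    have h1 := geom_bound (u+1) K
    have h2 : (2:ℕ)^(u+1+2*K) = 2^(u+2*K+1) := by ring
    omega
  have b2 : 2^(u+2*K+1) + (S + (2^u + p)) < 2^(u+2*K+2) := by
    have h2 : (2:ℕ)^(u+2*K+2) = 2 * 2^(u+2*K+1) := by ring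
    omega
  have b3 : 2^(u+2*K+2) + (2^(u+2*K+1) + (S + (2^u + p))) < 2^(u+2*K+3) := by
    have h2 : (2:ℕ)^(u+2*K+3) = 2 * 2^(u+2*K+2) := by ring
    omega
  -- peel equalities
  have E0 : ex (2^u + p) = u * 2^u + 2*p + ex p := ex_peel u p hp2
  have E1 : ex (S + (2^u + p)) + 2 * S
      = (u+1 + 2*K) * S + 2*K*(2^u + p) + ex (2^u + p) := ex_geom (u+1) K (2^u + p) hq0
  have E2 : ex (2^(u+2*K+1) + (S + (2^u + p)))
      = (u+2*K+1) * 2^(u+2*K+1) + 2*(S + (2^u + p)) + ex (S + (2^u + p)) :=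
    ex_peel _ _ b1
  have E3 : ex (2^(u+2*K+2) + (2^(u+2*K+1) + (S + (2^u + p))))
      = (u+2*K+2) * 2^(u+2*K+2) + 2*(2^(u+2*K+1) + (S + (2^u + p)))
        + ex (2^(u+2*K+1) + (S + (2^u + p))) := ex_peel _ _ b2
  have hexm : ex m = (u+2*K+3) * 2^(u+2*K+3)
      + 2*(2^(u+2*K+2) + (2^(u+2*K+1) + (S + (2^u + p))))
      + ex (2^(u+2*K+2) + (2^(u+2*K+1) + (S + (2^u + p)))) := by
    rw [hm']; exact ex_peel _ _ b3
  have hg3 : 3 * S + 2^(u+1) = 2^(u+1+2*K) := geom3 (u+1) K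
  -- move to ℤ
  zify at E0 E1 E2 E3 hexm hm' hg3
  have key : ((u:ℤ) + 2*K + 8) * m - ex m = 2^(u+2*K+6) + u*p - ex p := by
    linear_combination ((u:ℤ)+2*K+8) * hm' - hexm - E3 - E2 - E1 - E0 + hg3
  have hexp : (ex p : ℤ) < (u:ℤ) * p := by exact_mod_cast ex_lt p u hp1 hp2
  have hn1 : n - 1 = u+2*K+6 := by omega
  have hcast : (n:ℤ) = (u:ℤ) + 2*K + 7 := by exact_mod_cast hnuk
  rw [hn1, hcast]
  have key' : ((u:ℤ) + 2*K + 7 + 1) * m - ex m = 2^(u+2*K+6) + u*p - ex p := by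
    rw [show ((u:ℤ) + 2*K + 7 + 1) = ((u:ℤ) + 2*K + 8) by ring]
    exact key
  rw [key']
  linarith [hexp]
end

section
/- For n \ge 9, let \xi(m) = (n+1)m - ex_{Q_{n,2}}(m) as given by the closed formulas, and define \lambda(h) = \min\{\xi(m) : h \le m \le 2^{n-1}\}. Then for every h with \lceil 11 \cdot 2^{n-1}/48 \rceil \le h \le 2^{n-1}, \lambda(h) = 2^{n-1}. -/
/-- Closed formula for `ex_m(Q_{n,2})`, valid for `1 ≤ m ≤ 2^{n-1}`:
`ex m` for `m ≤ 2^{n-2}`, and `ex m + 2m - 2^{n-1}` for `2^{n-2} < m ≤ 2^{n-1}`. -/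
def exQ (n m : ℕ) : ℤ :=
  if m ≤ 2 ^ (n-2) then (ex m : ℤ) else (ex m : ℤ) + 2 * m - 2 ^ (n-1)

/-- `ξ_m(Q_{n,2}) = (n+1) m - ex_m(Q_{n,2})`. -/
def xi (n m : ℕ) : ℤ := ((n : ℤ) + 1) * m - exQ n m

lemma ex_zero : ex 0 = 0 := by rw [ex]

lemma ex_rec (m : ℕ) (hm : m ≠ 0) :
    ex m = Nat.log2 m * 2 ^ Nat.log2 m + 2 * (m - 2 ^ Nat.log2 m)
        + ex (m - 2 ^ Nat.log2 m) := by
  obtain ⟨k, rfl⟩ := Nat.exists_eq_succ_of_ne_zero hm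
  rw [ex]

lemma log2_eq_of (t r : ℕ) (h1 : 2 ^ t ≤ r) (h2 : r < 2 ^ (t + 1)) :
    Nat.log2 r = t := by
  rw [Nat.log2_eq_log_two]
  exact Nat.log_eq_of_pow_le_of_lt_pow h1 h2

/-- Decomposition: every nonzero `r` is `2^t + r'` with `r' < 2^t` and
`ex r = t·2^t + 2r' + ex r'`. -/
lemma ex_split (r : ℕ) (h : r ≠ 0) :
    ∃ t r', r = 2 ^ t + r' ∧ r' < 2 ^ t ∧ ex r = t * 2 ^ t + 2 * r' + ex r' := by
  set t := Nat.log2 r with ht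
  have h1 : 2 ^ t ≤ r := Nat.log2_self_le h
  have h2 : r < 2 ^ (t + 1) := Nat.lt_log2_self
  have h2' : 2 ^ (t + 1) = 2 * 2 ^ t := by ring
  refine ⟨t, r - 2 ^ t, by omega, by omega, ?_⟩
  have := ex_rec r h
  rw [this]

lemma ex_pow (k : ℕ) : ex (2 ^ k) = k * 2 ^ k := by
  have h : (2:ℕ) ^ k ≠ 0 := (Nat.two_pow_pos k).ne'
  rw [ex_rec _ h, log2_eq_of k _ le_rfl (by
    have : (2:ℕ) ^ (k+1) = 2 * 2 ^ k := by ring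
    have := Nat.two_pow_pos k
    omega)]
  simp [ex_zero]

/-- `ex r ≤ k r` for `r ≤ 2^k`. -/
lemma ex_le : ∀ r : ℕ, ∀ k : ℕ, r ≤ 2 ^ k → ex r ≤ k * r := by
  intro r
  induction r using Nat.strong_induction_on with
  | _ r ih =>
    intro k hr
    rcases Nat.eq_zero_or_pos r with rfl | hr0
    · simp [ex_zero]
    obtain ⟨t, r', rfl, hr'lt, hex⟩ := ex_split r hr0.ne'
    have ihr : ex r' ≤ t * r' := ih r' (by have := Nat.two_pow_pos t; omega) t hr'lt.le
    have htk : t ≤ k := by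
      have h2 : 2 ^ t ≤ 2 ^ k := by omega
      exact (Nat.pow_le_pow_iff_right one_lt_two).mp h2
    rcases eq_or_lt_of_le htk with rfl | hlt
    · -- t = k, so r' = 0
      have hr'0 : r' = 0 := by omega
      rw [hex, hr'0, ex_zero]
      nlinarith
    · obtain ⟨d, rfl⟩ : ∃ d, k = t + (d + 1) := ⟨k - t - 1, by omega⟩
      rw [hex]
      nlinarith [hr'lt.le]

/-- Lemma D: for `r ≤ 2^i` with `2^i ≤ 3r`, `ex r + 2^i ≤ (i+1) r`. -/
lemma lemD : ∀ i : ℕ, ∀ r : ℕ, r ≤ 2 ^ i → 2 ^ i ≤ 3 * r → ex r + 2 ^ i ≤ (i + 1) * r := by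
  intro i
  induction i using Nat.strong_induction_on with
  | _ i ih =>
    intro r hr h3
    rcases eq_or_lt_of_le hr with rfl | hrlt
    · rw [ex_pow]; ring_nf; omega
    -- r < 2^i
    match i, ih with
    | 0, _ => omega
    | 1, _ =>
      interval_cases r
      · omega
      · have : ex 1 = 0 := by
          rw [ex_rec 1 one_ne_zero]
          rw [log2_eq_of 0 1 (by norm_num) (by norm_num)]; simp [ex_zero]
        omega
    | (i+2), ih =>
      have hp2 : (2:ℕ) ^ (i+2) = 4 * 2 ^ i := by ring
      have hrpos : r ≠ 0 := by have := Nat.two_pow_pos i; omega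
      have hlow : 2 ^ i < r := by omega
      obtain ⟨t, r', rfl, hr'lt, hex⟩ := ex_split r hrpos
      have hti : t = i ∨ t = i + 1 := by
        have hl : i ≤ t := by
          by_contra hc
          push_neg at hc
          have : 2 ^ (t + 1) ≤ 2 ^ i := Nat.pow_le_pow_right (by norm_num) (by omega)
          have h2' : (2:ℕ) ^ (t+1) = 2 * 2 ^ t := by ring
          omega
        have hu : t < i + 2 := by
          by_contra hc
          push_neg at hc
          have : 2 ^ (i+2) ≤ 2 ^ t := Nat.pow_le_pow_right (by norm_num) hc
          omega
        omega
      rcases hti with rfl | rfl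
      · -- t = i : recursive case D(i, r')
        have h3' : 2 ^ t ≤ 3 * r' := by omega
        have hD := ih t (by omega) r' hr'lt.le h3'
        rw [hex]
        nlinarith
      · -- t = i+1 : use ex_le
        have hE := ex_le r' (i+1) hr'lt.le
        have hp : (2:ℕ) ^ (i + 1 + 1) = 2 * 2 ^ (i+1) := by ring
        rw [hex]
        nlinarith

/-- Lemma C: for `r ≤ 2^j` with `2^(j+1) ≤ 3r`, `ex r + 2^(j+1) ≤ (j+2) r`. -/
lemma lemC (j r : ℕ) (hr : r ≤ 2 ^ j) (h3 : 2 ^ (j + 1) ≤ 3 * r) :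
    ex r + 2 ^ (j + 1) ≤ (j + 2) * r := by
  have hp : (2:ℕ) ^ (j + 1) = 2 * 2 ^ j := by ring
  rcases eq_or_lt_of_le hr with rfl | hrlt
  · rw [ex_pow]
    nlinarith
  have hrpos : r ≠ 0 := by have := Nat.two_pow_pos (j+1); omega
  obtain ⟨t, r', rfl, hr'lt, hex⟩ := ex_split r hrpos
  have htj : t = j - 1 ∧ 1 ≤ j := by
    have hl : 2 ^ t < 2 ^ j := by omega
    have hl' : t < j := (Nat.pow_lt_pow_iff_right one_lt_two).mp hl
    have hg : ¬ (t + 1 < j) := by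
      intro hc
      have h4 : 2 ^ (t + 2) ≤ 2 ^ j := Nat.pow_le_pow_right (by norm_num) (by omega)
      have h5 : (2:ℕ) ^ (t + 2) = 4 * 2 ^ t := by ring
      have h6 : (2:ℕ) ^ (t + 1) = 2 * 2 ^ t := by ring
      omega
    omega
  obtain ⟨ht, hj⟩ := htj
  obtain ⟨j, rfl⟩ : ∃ j', j = j' + 1 := ⟨j - 1, by omega⟩
  have ht' : t = j := by omega
  subst ht'
  have hp2 : (2:ℕ) ^ (t + 1 + 1) = 4 * 2 ^ t := by ring
  have h3' : 2 ^ t ≤ 3 * r' := by omega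
  have hD := lemD t r' hr'lt.le h3'
  rw [hex]
  nlinarith

/-- Lemma B: for `r < 2^k` with `5·2^k ≤ 6r`, `ex r + 3·2^k ≤ (k+3) r`. -/
lemma lemB (k r : ℕ) (hrlt : r < 2 ^ k) (h6 : 5 * 2 ^ k ≤ 6 * r) :
    ex r + 3 * 2 ^ k ≤ (k + 3) * r := by
  obtain ⟨k, rfl⟩ : ∃ k', k = k' + 1 := by
    refine ⟨k - 1, ?_⟩
    rcases k with _ | k
    · simp at hrlt; omega
    · omega
  have hp : (2:ℕ) ^ (k + 1) = 2 * 2 ^ k := by ring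
  have hrpos : r ≠ 0 := by have := Nat.two_pow_pos (k+1); omega
  obtain ⟨t, r', rfl, hr'lt, hex⟩ := ex_split r hrpos
  have ht : t = k := by
    have hl : 2 ^ t < 2 ^ (k+1) := by omega
    have hl' : t < k + 1 := (Nat.pow_lt_pow_iff_right one_lt_two).mp hl
    have hg : ¬ (t < k) := by
      intro hc
      have h4 : 2 ^ (t + 1) ≤ 2 ^ k := Nat.pow_le_pow_right (by norm_num) (by omega)
      have h6' : (2:ℕ) ^ (t + 1) = 2 * 2 ^ t := by ring
      omega
    omega
  subst ht
  have h3' : 2 ^ (t + 1) ≤ 3 * r' := by omega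
  have hC := lemC t r' hr'lt.le h3'
  rw [hex]
  nlinarith

/-- Main ℕ-level inequality, branch 1: for `11·2^(a+3) ≤ 48 m` and `m ≤ 2^(a+2)`,
`ex m + 2^(a+3) ≤ (a+5) m`. -/
lemma branch1 (a m : ℕ) (hlow : 11 * 2 ^ (a + 3) ≤ 48 * m) (hup : m ≤ 2 ^ (a + 2)) :
    ex m + 2 ^ (a + 3) ≤ (a + 5) * m := by
  have hp3 : (2:ℕ) ^ (a + 3) = 8 * 2 ^ a := by ring
  have hp2 : (2:ℕ) ^ (a + 2) = 4 * 2 ^ a := by ring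
  have hp1 : (2:ℕ) ^ (a + 1) = 2 * 2 ^ a := by ring
  have hmpos : m ≠ 0 := by have := Nat.two_pow_pos (a+3); omega
  have hmlow : 2 ^ a < m := by omega
  obtain ⟨t, r, rfl, hrlt, hex⟩ := ex_split m hmpos
  have hta : a ≤ t := by
    by_contra hc
    push_neg at hc
    have h4 : 2 ^ (t + 1) ≤ 2 ^ a := Nat.pow_le_pow_right (by norm_num) (by omega)
    have h5 : (2:ℕ) ^ (t + 1) = 2 * 2 ^ t := by ring
    omega
  have htu : t ≤ a + 2 := by
    by_contra hc
    push_neg at hc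
    have h4 : 2 ^ (a + 3) ≤ 2 ^ t := Nat.pow_le_pow_right (by norm_num) (by omega)
    omega
  have hcases : t = a ∨ t = a + 1 ∨ t = a + 2 := by omega
  rcases hcases with rfl | rfl | rfl
  · -- t = a
    have h6 : 5 * 2 ^ t ≤ 6 * r := by omega
    have hB := lemB t r hrlt h6
    rw [hex]
    nlinarith
  · -- t = a+1
    have hE := ex_le r (a + 1) hrlt.le
    rw [hex]
    nlinarith
  · -- t = a+2 : then r = 0
    have hr0 : r = 0 := by omega
    rw [hex, hr0, ex_zero]
    nlinarith

/-- Main Theorem 1(a): for `n ≥ 9` and every `h` with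
`⌈11·2^{n-1}/48⌉ ≤ h ≤ 2^{n-1}`, the `h`-extra edge-connectivity
`λ_h(Q_{n,2}) = min {ξ(m) : h ≤ m ≤ 2^{n-1}}` equals `2^{n-1}`. -/
theorem lambda_concentration (n h : ℕ) (hn : 9 ≤ n)
    (h1 : (⌈(11 * 2 ^ (n-1) : ℚ) / 48⌉ : ℤ) ≤ (h : ℤ)) (h2 : h ≤ 2 ^ (n-1)) :
    IsLeast {x : ℤ | ∃ m : ℕ, h ≤ m ∧ m ≤ 2 ^ (n-1) ∧ x = xi n m} (2 ^ (n-1)) := by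
  obtain ⟨a, rfl⟩ : ∃ a, n = a + 4 := ⟨n - 4, by omega⟩
  have hn1 : a + 4 - 1 = a + 3 := by omega
  have hn2 : a + 4 - 2 = a + 2 := by omega
  -- translate the ceiling hypothesis
  have hceil : 11 * 2 ^ (a + 3) ≤ 48 * h := by
    have hq : (11 * 2 ^ (a + 3) : ℚ) / 48 ≤ (h : ℚ) := by
      calc (11 * 2 ^ (a + 3) : ℚ) / 48
          ≤ ((⌈(11 * 2 ^ (a + 4 - 1) : ℚ) / 48⌉ : ℤ) : ℚ) := by
            rw [hn1]; exact Int.le_ceil _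
        _ ≤ (h : ℚ) := by exact_mod_cast h1
    have h48 : (11 * 2 ^ (a + 3) : ℚ) ≤ 48 * (h : ℚ) := by
      rw [div_le_iff₀ (by norm_num)] at hq
      linarith
    exact_mod_cast h48
  constructor
  · -- membership: m = 2^(n-1)
    refine ⟨2 ^ (a + 4 - 1), by omega, le_rfl, ?_⟩
    rw [xi, exQ, hn1, hn2]
    have hnle : ¬ ((2:ℕ) ^ (a + 3) ≤ 2 ^ (a + 2)) := by
      have h3 : (2:ℕ) ^ (a + 3) = 2 * 2 ^ (a + 2) := by ring
      have hpos : 0 < (2:ℕ) ^ (a + 2) := Nat.two_pow_pos _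
      omega
    rw [if_neg hnle, ex_pow]
    push_cast
    ring
  · -- lower bound
    rintro x ⟨m, hm1, hm2, rfl⟩
    rw [hn1] at hm2
    have hm48 : 11 * 2 ^ (a + 3) ≤ 48 * m := le_trans hceil (by omega)
    rw [xi, exQ, hn1, hn2]
    split_ifs with hc
    · -- m ≤ 2^(a+2)
      have hb := branch1 a m hm48 hc
      have hcast : (ex m : ℤ) + 2 ^ (a + 3) ≤ ((a : ℤ) + 5) * m := by exact_mod_cast hb
      push_cast
      linarith
    · -- 2^(a+2) < m ≤ 2^(a+3)
      have hE : ex m ≤ (a + 3) * m := ex_le m (a + 3) hm2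
      have hcast : (ex m : ℤ) ≤ ((a : ℤ) + 3) * m := by exact_mod_cast hE
      push_cast
      linarith
end
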